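/- In the ring of formal power series in q over ℚ[x,y], let F = Σ_{n≥0} P_n(x,y) · q^n / n! (with P_0(x,y) = 1), where P_n(x,y) = Σ_{T ∈ 𝒫_n} x^{impr(T)} y^{prop(T)}. Then F^2 · (1 - 2(x+y)q) = 1; equivalently, Σ_{n≥0} P_n(x,y) q^n/n! = 1/√(1 - 2(x+y)q). -/

import Mathlib

/-- A plane tree with labeled vertices: a root label together with an ordered
list of child subtrees.  (A plane tree is a rooted tree in which the children
of each node are linearly ordered.) -/
inductive LTree : Type where
  | node : ℕ → List LTree → LTree

namespace LTree

/-- The label of the root. -/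
def rootLabel : LTree → ℕ
  | node a _ => a

/-- The list of child subtrees of the root. -/
def children : LTree → List LTree
  | node _ cs => cs

/-- `deg_T(root)`: the number of children of the root. -/
def rootDeg (t : LTree) : ℕ := (children t).length

mutual
  /-- The list of all vertex labels of a tree. -/
  def labels : LTree → List ℕ
    | node a cs => a :: labelsList cs
  /-- The list of all vertex labels of a forest. -/
  def labelsList : List LTree → List ℕ
    | [] => []
    | c :: rest => labels c ++ labelsList rest
end

/-- `β(v)`: the smallest label occurring in the subtree `t` rooted at `v`. -/
def minLabel (t : LTree) : ℕ := (labels t).foldr min (rootLabel t)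

/-- `min { j, β(c₁), …, β(cₖ) }` for a vertex `j` and a list of subtrees `c₁, …, cₖ`. -/
def minOver (j : ℕ) (rest : List LTree) : ℕ := (rest.map minLabel).foldr min j

mutual
  /-- The list of edges of a tree, each recorded as a (parent label, child label)
  pair, in depth-first order. -/
  def edgeList : LTree → List (ℕ × ℕ)
    | node a cs => edgeListAux a cs
  def edgeListAux : ℕ → List LTree → List (ℕ × ℕ)
    | _, [] => []
    | a, c :: rest => (a, rootLabel c) :: (edgeList c ++ edgeListAux a rest)
end

mutual
  /-- The list of improper edges of a tree: if a vertex `j` has children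
  `j₁, …, jₖ` (ordered left to right), the edge `(j, jᵢ)` is improper when
  `β(jᵢ) < min { j, β(j_{i+1}), …, β(jₖ) }`. -/
  def improperEdges : LTree → List (ℕ × ℕ)
    | node a cs => improperEdgesAux a cs
  def improperEdgesAux : ℕ → List LTree → List (ℕ × ℕ)
    | _, [] => []
    | j, c :: rest =>
        (if minLabel c < minOver j rest then [(j, rootLabel c)] else [])
          ++ improperEdges c ++ improperEdgesAux j rest
end

mutual
  /-- The list of proper (i.e. non-improper) edges of a tree. -/
  def properEdges : LTree → List (ℕ × ℕ)
    | node a cs => properEdgesAux a cs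
  def properEdgesAux : ℕ → List LTree → List (ℕ × ℕ)
    | _, [] => []
    | j, c :: rest =>
        (if minLabel c < minOver j rest then [] else [(j, rootLabel c)])
          ++ properEdges c ++ properEdgesAux j rest
end

/-- `impr T`: the number of improper edges of `T`. -/
def impr (t : LTree) : ℕ := (improperEdges t).length

/-- `prop T`: the number of proper edges of `T`. -/
def propCount (t : LTree) : ℕ := (properEdges t).length

/-- The number of edges of `T`. -/
def edgeCount (t : LTree) : ℕ := (edgeList t).length

/-- `T` is a labeled plane tree with `n` edges: its `n + 1` vertices are labeled
bijectively with `{1, 2, …, n + 1}`. -/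
def IsLPT (n : ℕ) (t : LTree) : Prop := (labels t).Perm (List.range' 1 (n + 1))

/-- `T` is increasing: vertex labels increase along every path from the root. -/
inductive Increasing : LTree → Prop where
  | node (a : ℕ) (cs : List LTree) :
      (∀ c ∈ cs, a < rootLabel c) → (∀ c ∈ cs, Increasing c) → Increasing (node a cs)

end LTree

open MvPolynomial

/-- `Pₙ(x,y) = Σ_{T ∈ 𝒫ₙ} x^{impr T} y^{prop T}`, the sum over all labeled plane
trees with `n` edges, as a polynomial in `ℚ[x,y]` (with `x = X 0`, `y = X 1`).
For `n = 0` the unique such tree is a single vertex, so `P₀(x,y) = 1`. -/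
noncomputable def Ppoly (n : ℕ) : MvPolynomial (Fin 2) ℚ :=
  ∑ᶠ T ∈ {T : LTree | LTree.IsLPT n T},
    (X 0 : MvPolynomial (Fin 2) ℚ) ^ LTree.impr T * (X 1) ^ LTree.propCount T

namespace LTree

/-! ### Auxiliary lemmas: min over labels -/

theorem foldr_min_comm (L : List ℕ) (x y : ℕ) :
    min y (L.foldr min x) = min x (L.foldr min y) := by
  induction L with
  | nil => exact min_comm y x
  | cons a L ih =>
      simp only [List.foldr_cons]
      rw [min_left_comm y a, ih, min_left_comm a x]

theorem foldr_min_le (L : List ℕ) (x : ℕ) : L.foldr min x ≤ x := by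
  induction L with
  | nil => exact le_rfl
  | cons a L ih => exact le_trans (min_le_right _ _) ih

theorem foldr_min_append (L1 L2 : List ℕ) (x : ℕ) :
    (L1 ++ L2).foldr min x = L1.foldr min (L2.foldr min x) := by
  simp [List.foldr_append]

theorem foldr_min_labels (t : LTree) (x : ℕ) :
    (labels t).foldr min x = min x (minLabel t) := by
  obtain ⟨a, cs⟩ := t
  show (a :: labelsList cs).foldr min x = min x (minLabel (node a cs))
  have h : minLabel (node a cs) = min a ((labelsList cs).foldr min a) := rfl
  simp only [List.foldr_cons, h]
  rw [foldr_min_comm _ x a, min_eq_right (foldr_min_le _ _)]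

theorem foldr_min_labelsList (cs : List LTree) (x : ℕ) :
    (labelsList cs).foldr min x = (cs.map minLabel).foldr min x := by
  induction cs generalizing x with
  | nil => rfl
  | cons c rest ih =>
      show (labels c ++ labelsList rest).foldr min x = min (minLabel c) _
      rw [foldr_min_append, foldr_min_labels, ih, min_comm]

theorem minLabel_node (a : ℕ) (cs : List LTree) :
    minLabel (node a cs) = minOver a cs := by
  show (a :: labelsList cs).foldr min a = minOver a cs
  simp only [List.foldr_cons]
  rw [foldr_min_labelsList]
  exact min_eq_right (foldr_min_le _ _)

theorem minOver_cons (j : ℕ) (c : LTree) (cs : List LTree) :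
    minOver j (c :: cs) = min (minLabel c) (minOver j cs) := rfl

theorem minLabel_cons (a : ℕ) (c : LTree) (cs : List LTree) :
    minLabel (node a (c :: cs)) = min (minLabel c) (minLabel (node a cs)) := by
  rw [minLabel_node, minLabel_node, minOver_cons]

theorem minLabel_mem (t : LTree) : minLabel t ∈ labels t := by
  obtain ⟨a, cs⟩ := t
  have key : ∀ (L : List ℕ) (x : ℕ), L.foldr min x = x ∨ L.foldr min x ∈ L := by
    intro L
    induction L with
    | nil => exact fun x => Or.inl rfl
    | cons b L ih =>
        intro x
        rcases min_cases b (L.foldr min x) with ⟨h, _⟩ | ⟨h, _⟩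
        · right; simp [h]
        · rcases ih x with h2 | h2
          · left; simpa [h] using h2
          · right; simp only [List.foldr_cons, h]; exact List.mem_cons_of_mem _ h2
  have h := key (labels (node a cs)) a
  rcases h with h | h
  · show (labels (node a cs)).foldr min a ∈ _
    rw [h]; show a ∈ a :: labelsList cs; exact List.mem_cons_self
  · exact h

theorem minLabel_le (t : LTree) {x : ℕ} (hx : x ∈ labels t) : minLabel t ≤ x := by
  have key : ∀ (L : List ℕ) (s : ℕ), ∀ y ∈ L, L.foldr min s ≤ y := by
    intro L s
    induction L with
    | nil => simp
    | cons b L ih =>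
        intro y hy
        rcases List.mem_cons.1 hy with rfl | hy
        · exact min_le_left _ _
        · exact le_trans (min_le_right _ _) (ih y hy)
  exact key _ _ _ hx

/-! ### Recursions for impr / propCount -/

theorem impr_nil (a : ℕ) : impr (node a []) = 0 := rfl
theorem prop_nil (a : ℕ) : propCount (node a []) = 0 := rfl

theorem impr_cons (a : ℕ) (c : LTree) (cs : List LTree) :
    impr (node a (c :: cs)) =
      (if minLabel c < minLabel (node a cs) then 1 else 0) + impr c + impr (node a cs) := by
  show (improperEdgesAux a (c :: cs)).length = _
  rw [improperEdgesAux, minLabel_node]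
  simp only [List.length_append]
  rcases lt_or_ge (minLabel c) (minOver a cs) with h | h
  · rw [if_pos h, if_pos h]; simp [impr, improperEdges]
  · rw [if_neg (not_lt.2 h), if_neg (not_lt.2 h)]; simp [impr, improperEdges]

theorem prop_cons (a : ℕ) (c : LTree) (cs : List LTree) :
    propCount (node a (c :: cs)) =
      (if minLabel c < minLabel (node a cs) then 0 else 1) + propCount c
        + propCount (node a cs) := by
  show (properEdgesAux a (c :: cs)).length = _
  rw [properEdgesAux, minLabel_node]
  simp only [List.length_append]
  rcases lt_or_ge (minLabel c) (minOver a cs) with h | h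
  · rw [if_pos h, if_pos h]; simp [propCount, properEdges]
  · rw [if_neg (not_lt.2 h), if_neg (not_lt.2 h)]; simp [propCount, properEdges]

theorem labels_node (a : ℕ) (cs : List LTree) : labels (node a cs) = a :: labelsList cs := rfl
theorem labelsList_cons (c : LTree) (cs : List LTree) :
    labelsList (c :: cs) = labels c ++ labelsList cs := rfl

theorem mem_labels_left {x : ℕ} (a : ℕ) {c : LTree} {cs : List LTree}
    (hx : x ∈ labels c) : x ∈ labels (node a (c :: cs)) := by
  rw [labels_node, labelsList_cons]
  exact List.mem_cons_of_mem _ (List.mem_append_left _ hx)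

theorem mem_labels_right {x : ℕ} {a : ℕ} {c : LTree} {cs : List LTree}
    (hx : x ∈ labels (node a cs)) : x ∈ labels (node a (c :: cs)) := by
  rw [labels_node, labelsList_cons]
  rw [labels_node] at hx
  rcases List.mem_cons.1 hx with rfl | hx
  · exact List.mem_cons_self
  · exact List.mem_cons_of_mem _ (List.mem_append_right _ hx)

/-! ### Relabeling -/

def relabel (φ : ℕ → ℕ) : LTree → LTree
  | node a cs => node (φ a) (cs.attach.map fun c => relabel φ c.1)
  decreasing_by
    have h := List.sizeOf_lt_of_mem c.2
    simp only [LTree.node.sizeOf_spec]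
    omega

theorem relabel_node (φ : ℕ → ℕ) (a : ℕ) (cs : List LTree) :
    relabel φ (node a cs) = node (φ a) (cs.map (relabel φ)) := by
  rw [relabel]
  congr 1
  simp [List.attach_map_val]

def MonoOn (φ : ℕ → ℕ) (l : List ℕ) : Prop :=
  ∀ a ∈ l, ∀ b ∈ l, (φ a < φ b ↔ a < b)

theorem labels_relabel (φ : ℕ → ℕ) : ∀ t : LTree, labels (relabel φ t) = (labels t).map φ
  | node a [] => by rw [relabel_node]; rfl
  | node a (c :: cs) => by
      rw [relabel_node]
      have h1 := labels_relabel φ c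
      have h2 := labels_relabel φ (node a cs)
      rw [relabel_node] at h2
      show φ a :: (labels (relabel φ c) ++ labelsList (cs.map (relabel φ))) = _
      have h3 : labelsList (cs.map (relabel φ)) = (labelsList cs).map φ := by
        have e1 : labels (node (φ a) (cs.map (relabel φ)))
            = φ a :: labelsList (cs.map (relabel φ)) := rfl
        rw [e1] at h2
        have e2 : (labels (node a cs)).map φ = φ a :: (labelsList cs).map φ := rfl
        rw [e2] at h2
        exact List.tail_eq_of_cons_eq h2
      rw [h1, h3]
      show _ = (a :: (labels c ++ labelsList cs)).map φ
      simp
  termination_by t => sizeOf t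
  decreasing_by all_goals (simp; try omega)

theorem minLabel_relabel (φ : ℕ → ℕ) (t : LTree) (h : MonoOn φ (labels t)) :
    minLabel (relabel φ t) = φ (minLabel t) := by
  have hle : ∀ a ∈ labels t, ∀ b ∈ labels t, (φ a ≤ φ b ↔ a ≤ b) := by
    intro a ha b hb
    rw [← not_lt, ← not_lt, not_iff_not]
    exact h b hb a ha
  have h1 : minLabel (relabel φ t) ∈ (labels t).map φ := by
    rw [← labels_relabel]; exact minLabel_mem _
  have h2 : φ (minLabel t) ∈ labels (relabel φ t) := by
    rw [labels_relabel]; exact List.mem_map_of_mem (minLabel_mem t)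
  obtain ⟨b, hb, hb2⟩ := List.mem_map.1 h1
  have l1 : minLabel (relabel φ t) ≤ φ (minLabel t) := minLabel_le _ h2
  have l2 : φ (minLabel t) ≤ φ b := (hle _ (minLabel_mem t) _ hb).2 (minLabel_le t hb)
  omega

theorem impr_relabel (φ : ℕ → ℕ) :
    ∀ t : LTree, MonoOn φ (labels t) → impr (relabel φ t) = impr t
  | node a [] => fun _ => by rw [relabel_node]; rfl
  | node a (c :: cs) => fun h => by
      have hs1 : MonoOn φ (labels c) := fun x hx y hy =>
        h x (mem_labels_left a hx) y (mem_labels_left a hy)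
      have hs2 : MonoOn φ (labels (node a cs)) := fun x hx y hy =>
        h x (mem_labels_right hx) y (mem_labels_right hy)
      rw [relabel_node]
      simp only [List.map_cons]
      rw [impr_cons, impr_cons]
      have e2 : node (φ a) (cs.map (relabel φ)) = relabel φ (node a cs) :=
        (relabel_node φ a cs).symm
      rw [e2, minLabel_relabel φ c hs1, minLabel_relabel φ (node a cs) hs2,
        impr_relabel φ c hs1, impr_relabel φ (node a cs) hs2]
      have hiff := h _ (mem_labels_left a (minLabel_mem c))
        _ (mem_labels_right (minLabel_mem (node a cs)))
      simp only [hiff]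
  termination_by t => sizeOf t
  decreasing_by all_goals (simp; try omega)

theorem prop_relabel (φ : ℕ → ℕ) :
    ∀ t : LTree, MonoOn φ (labels t) → propCount (relabel φ t) = propCount t
  | node a [] => fun _ => by rw [relabel_node]; rfl
  | node a (c :: cs) => fun h => by
      have hs1 : MonoOn φ (labels c) := fun x hx y hy =>
        h x (mem_labels_left a hx) y (mem_labels_left a hy)
      have hs2 : MonoOn φ (labels (node a cs)) := fun x hx y hy =>
        h x (mem_labels_right hx) y (mem_labels_right hy)
      rw [relabel_node]
      simp only [List.map_cons]
      rw [prop_cons, prop_cons]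
      have e2 : node (φ a) (cs.map (relabel φ)) = relabel φ (node a cs) :=
        (relabel_node φ a cs).symm
      rw [e2, minLabel_relabel φ c hs1, minLabel_relabel φ (node a cs) hs2,
        prop_relabel φ c hs1, prop_relabel φ (node a cs) hs2]
      have hiff := h _ (mem_labels_left a (minLabel_mem c))
        _ (mem_labels_right (minLabel_mem (node a cs)))
      simp only [hiff]
  termination_by t => sizeOf t
  decreasing_by all_goals (simp; try omega)

theorem relabel_relabel (φ ψ : ℕ → ℕ) :
    ∀ t : LTree, relabel φ (relabel ψ t) = relabel (fun x => φ (ψ x)) t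
  | node a [] => by simp [relabel_node]
  | node a (c :: cs) => by
      have h1 := relabel_relabel φ ψ c
      have h2 := relabel_relabel φ ψ (node a cs)
      simp only [relabel_node, List.map_cons, List.map_map, LTree.node.injEq,
        true_and, Function.comp] at h2 ⊢
      rw [h1, h2]
  termination_by t => sizeOf t
  decreasing_by all_goals (simp; try omega)

theorem relabel_eq_self (φ : ℕ → ℕ) :
    ∀ t : LTree, (∀ a ∈ labels t, φ a = a) → relabel φ t = t
  | node a [] => fun h => by
      rw [relabel_node]
      simp only [List.map_nil, LTree.node.injEq, and_true]
      exact h a (List.mem_cons_self)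
  | node a (c :: cs) => fun h => by
      have h1 := relabel_eq_self φ c (fun x hx => h x (mem_labels_left a hx))
      have h2 := relabel_eq_self φ (node a cs) (fun x hx => h x (mem_labels_right hx))
      rw [relabel_node] at h2 ⊢
      simp only [List.map_cons, LTree.node.injEq] at h2 ⊢
      exact ⟨h2.1, by rw [h1, h2.2]⟩
  termination_by t => sizeOf t
  decreasing_by all_goals (simp; try omega)

/-! ### Finiteness -/

theorem one_le_labels_length (t : LTree) : 1 ≤ (labels t).length := by
  obtain ⟨a, cs⟩ := t
  rw [labels_node]
  simp

theorem length_le_labelsList (cs : List LTree) : cs.length ≤ (labelsList cs).length := by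
  induction cs with
  | nil => simp [labelsList]
  | cons c rest ih =>
      rw [labelsList_cons, List.length_append, List.length_cons]
      have := one_le_labels_length c
      omega

theorem labels_length_le_labelsList {c : LTree} {cs : List LTree} (hc : c ∈ cs) :
    (labels c).length ≤ (labelsList cs).length := by
  induction cs with
  | nil => cases hc
  | cons d rest ih =>
      rw [labelsList_cons, List.length_append]
      rcases List.mem_cons.1 hc with rfl | hc
      · omega
      · have := ih hc; omega

theorem mem_labelsList_of_mem {x : ℕ} {c : LTree} {cs : List LTree} (hc : c ∈ cs)
    (hx : x ∈ labels c) : x ∈ labelsList cs := by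
  induction cs with
  | nil => cases hc
  | cons d rest ih =>
      rw [labelsList_cons]
      rcases List.mem_cons.1 hc with rfl | hc
      · exact List.mem_append_left _ hx
      · exact List.mem_append_right _ (ih hc)

theorem finite_bounded_lists {A : Set LTree} (hA : A.Finite) :
    ∀ n : ℕ, {cs : List LTree | cs.length ≤ n ∧ ∀ c ∈ cs, c ∈ A}.Finite
  | 0 => Set.Finite.subset (Set.finite_singleton []) (by
      rintro cs ⟨h1, _⟩
      simp only [Set.mem_singleton_iff]
      exact List.eq_nil_of_length_eq_zero (Nat.le_zero.1 h1))
  | (n+1) => by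
      have hrec := finite_bounded_lists hA n
      refine Set.Finite.subset ((Set.finite_singleton ([] : List LTree)).union
        (Set.Finite.image2 List.cons hA hrec)) ?_
      rintro cs ⟨h1, h2⟩
      cases cs with
      | nil => exact Or.inl rfl
      | cons c rest =>
          refine Or.inr (Set.mem_image2_of_mem (h2 c (List.mem_cons_self)) ?_)
          refine ⟨by simpa using h1, fun d hd => h2 d (List.mem_cons_of_mem _ hd)⟩

theorem finite_trees : ∀ n N : ℕ,
    {t : LTree | (labels t).length ≤ n + 1 ∧ ∀ a ∈ labels t, a < N}.Finite
  | 0, N => by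
      refine Set.Finite.subset ((Set.finite_Iio N).image (fun a => node a [])) ?_
      rintro t ⟨h1, h2⟩
      obtain ⟨a, cs⟩ := t
      have hcs : cs = [] := by
        have e := length_le_labelsList cs
        rw [labels_node, List.length_cons] at h1
        have : (labelsList cs).length = 0 := by omega
        exact List.eq_nil_of_length_eq_zero (by omega)
      subst hcs
      exact ⟨a, h2 a (List.mem_cons_self), rfl⟩
  | (n+1), N => by
      have hrec := finite_trees n N
      refine Set.Finite.subset (Set.Finite.image2 node (Set.finite_Iio N)
        (finite_bounded_lists hrec (n+1))) ?_
      rintro t ⟨h1, h2⟩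
      obtain ⟨a, cs⟩ := t
      refine Set.mem_image2_of_mem (h2 a (List.mem_cons_self)) ?_
      rw [labels_node, List.length_cons] at h1
      have hll : (labelsList cs).length ≤ n + 1 := by omega
      refine ⟨le_trans (length_le_labelsList cs) hll, fun c hc => ?_⟩
      refine ⟨le_trans (labels_length_le_labelsList hc) hll, fun x hx => ?_⟩
      exact h2 x (by
        rw [labels_node]
        exact List.mem_cons_of_mem _ (mem_labelsList_of_mem hc hx))

/-- Trees whose list of labels is a permutation of `l`. -/
def TS (l : List ℕ) : Set LTree := {T | (labels T).Perm l}

theorem le_foldr_max (l : List ℕ) : ∀ a ∈ l, a ≤ l.foldr max 0 := by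
  induction l with
  | nil => simp
  | cons b l ih =>
      intro a ha
      rcases List.mem_cons.1 ha with rfl | ha
      · exact le_max_left _ _
      · exact le_trans (ih a ha) (le_max_right _ _)

theorem TS_finite (l : List ℕ) : (TS l).Finite := by
  refine Set.Finite.subset (finite_trees l.length (l.foldr max 0 + 1)) ?_
  intro t ht
  have hlen : (labels t).length = l.length := ht.length_eq
  constructor
  · omega
  · intro a ha
    have : a ∈ l := ht.mem_iff.1 ha
    have := le_foldr_max l a this
    omega

/-! ### The weight and generating sums -/

noncomputable def wt (T : LTree) : MvPolynomial (Fin 2) ℚ :=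
  MvPolynomial.X 0 ^ impr T * MvPolynomial.X 1 ^ propCount T

noncomputable def Q (l : List ℕ) : MvPolynomial (Fin 2) ℚ := ∑ᶠ T ∈ TS l, wt T

theorem Q_eq_sum (l : List ℕ) : Q l = ∑ T ∈ (TS_finite l).toFinset, wt T :=
  finsum_mem_eq_finite_toFinset_sum _ (TS_finite l)

theorem TS_nil : TS ([] : List ℕ) = ∅ := by
  ext t
  simp only [TS, Set.mem_setOf_eq, Set.mem_empty_iff_false, iff_false]
  intro h
  have h1 := h.length_eq
  have h2 := one_le_labels_length t
  rw [List.length_nil] at h1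
  omega

theorem Q_nil : Q [] = 0 := by
  rw [Q, TS_nil, finsum_mem_empty]

theorem TS_singleton (a : ℕ) : TS [a] = {node a []} := by
  ext t
  obtain ⟨b, cs⟩ := t
  simp only [TS, Set.mem_setOf_eq, Set.mem_singleton_iff]
  constructor
  · intro h
    rw [labels_node, List.perm_singleton] at h
    have hb : b = a := by injection h
    have hcs : labelsList cs = [] := by injection h
    have : cs = [] := by
      have h1 := length_le_labelsList cs
      rw [hcs] at h1
      exact List.eq_nil_of_length_eq_zero (by simpa using h1)
    rw [hb, this]
  · intro h
    rw [h]
    exact List.Perm.refl _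

theorem Q_singleton (a : ℕ) : Q [a] = 1 := by
  rw [Q, TS_singleton, finsum_mem_singleton]
  show MvPolynomial.X 0 ^ impr (node a []) * MvPolynomial.X 1 ^ propCount (node a []) = 1
  rw [impr_nil, prop_nil, pow_zero, pow_zero, mul_one]

/-! ### Relabeling bijection: sum over trees on a label set -/

theorem getD0 {l : List ℕ} {n : ℕ} (hn : n < l.length) : l.getD n 0 = l[n] :=
  List.getD_eq_getElem l 0 hn

theorem sorted_getD_lt_iff {l : List ℕ} (hst : l.Pairwise (· < ·)) {i j : ℕ}
    (hi : i < l.length) (hj : j < l.length) : l.getD i 0 < l.getD j 0 ↔ i < j := by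
  rw [getD0 hi, getD0 hj]
  have hmono := (List.sortedLT_iff_pairwise.2 hst).strictMono_get
  constructor
  · intro h
    by_contra hc
    push_neg at hc
    rcases Nat.lt_or_ge j i with hji | hji
    · have := hmono (show (⟨j, hj⟩ : Fin l.length) < ⟨i, hi⟩ from hji)
      simp only [List.get_eq_getElem] at this
      omega
    · have : i = j := by omega
      subst this
      omega
  · intro h
    have := hmono (show (⟨i, hi⟩ : Fin l.length) < ⟨j, hj⟩ from h)
    simpa using this

theorem Q_sort_range (S : Finset ℕ) :
    Q (S.sort (· ≤ ·)) = Q (List.range' 1 S.card) := by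
  set l := S.sort (· ≤ ·) with hl
  have hlen : l.length = S.card := Finset.length_sort _
  have hnd : l.Nodup := Finset.sort_nodup _ _
  have hst : l.Pairwise (· < ·) := List.sortedLT_iff_pairwise.1 (Finset.sortedLT_sort S)
  set ψ : ℕ → ℕ := fun k => l.getD (k-1) 0 with hψ
  set φ : ℕ → ℕ := fun x => l.idxOf x + 1 with hφ
  have hmemr : ∀ k : ℕ, k ∈ List.range' 1 S.card ↔ 1 ≤ k ∧ k < S.card + 1 := by
    intro k; rw [List.mem_range'_1]; omega
  have hmap : (List.range' 1 S.card).map ψ = l := by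
    apply List.ext_getElem
    · simp [hlen]
    · intro i h1 h2
      simp only [List.getElem_map, List.getElem_range'_1]
      show ψ (1 + i) = l[i]
      have : 1 + i - 1 = i := by omega
      rw [hψ]
      simp only [this]
      exact getD0 h2
  have hmapφ : l.map φ = List.range' 1 S.card := by
    apply List.ext_getElem
    · simp [hlen]
    · intro i h1 h2
      simp only [List.getElem_map, List.getElem_range'_1]
      have hil : i < l.length := by simpa using h1
      show l.idxOf (l[i]'hil) + 1 = 1 + i
      rw [hnd.idxOf_getElem]
      omega
  have hφψ : ∀ k ∈ List.range' 1 S.card, φ (ψ k) = k := by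
    intro k hk
    rw [hmemr] at hk
    have hk1 : k - 1 < l.length := by omega
    show l.idxOf (l.getD (k-1) 0) + 1 = k
    rw [getD0 hk1, hnd.idxOf_getElem]
    omega
  have hψφ : ∀ x ∈ l, ψ (φ x) = x := by
    intro x hx
    have hix : l.idxOf x < l.length := List.idxOf_lt_length_iff.2 hx
    show l.getD (l.idxOf x + 1 - 1) 0 = x
    have : l.idxOf x + 1 - 1 = l.idxOf x := by omega
    rw [this, getD0 hix]
    exact List.getElem_idxOf hix
  have hmonoφ : MonoOn φ l := by
    intro a ha b hb
    have hia : l.idxOf a < l.length := List.idxOf_lt_length_iff.2 ha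
    have hib : l.idxOf b < l.length := List.idxOf_lt_length_iff.2 hb
    have e1 : a = l.getD (l.idxOf a) 0 := by
      rw [getD0 hia]; exact (List.getElem_idxOf hia).symm
    have e2 : b = l.getD (l.idxOf b) 0 := by
      rw [getD0 hib]; exact (List.getElem_idxOf hib).symm
    constructor
    · intro h
      rw [e1, e2]
      rw [sorted_getD_lt_iff hst hia hib]
      simpa [hφ] using h
    · intro h
      rw [e1, e2, sorted_getD_lt_iff hst hia hib] at h
      simp only [hφ]
      omega
  have hmonoψ : MonoOn ψ (List.range' 1 S.card) := by
    intro a ha b hb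
    rw [hmemr] at ha hb
    have hia : a - 1 < l.length := by omega
    have hib : b - 1 < l.length := by omega
    rw [hψ]
    simp only
    rw [sorted_getD_lt_iff hst hia hib]
    omega
  rw [Q_eq_sum, Q_eq_sum]
  refine Finset.sum_bij' (fun T _ => relabel φ T) (fun T _ => relabel ψ T) ?_ ?_ ?_ ?_ ?_
  · intro T hT
    rw [Set.Finite.mem_toFinset] at hT ⊢
    have hT' : (labels T).Perm l := hT
    show (labels (relabel φ T)).Perm (List.range' 1 S.card)
    rw [labels_relabel, ← hmapφ]
    exact hT'.map φ
  · intro T hT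
    rw [Set.Finite.mem_toFinset] at hT ⊢
    have hT' : (labels T).Perm (List.range' 1 S.card) := hT
    show (labels (relabel ψ T)).Perm l
    rw [labels_relabel, ← hmap]
    exact hT'.map ψ
  · intro T hT
    rw [Set.Finite.mem_toFinset] at hT
    have hT' : (labels T).Perm l := hT
    show relabel ψ (relabel φ T) = T
    rw [relabel_relabel]
    refine relabel_eq_self _ T fun a ha => ?_
    exact hψφ a (hT'.mem_iff.1 ha)
  · intro T hT
    rw [Set.Finite.mem_toFinset] at hT
    have hT' : (labels T).Perm (List.range' 1 S.card) := hT
    show relabel φ (relabel ψ T) = T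
    rw [relabel_relabel]
    refine relabel_eq_self _ T fun a ha => ?_
    exact hφψ a (hT'.mem_iff.1 ha)
  · intro T hT
    rw [Set.Finite.mem_toFinset] at hT
    have hT' : (labels T).Perm l := hT
    have hm : MonoOn φ (labels T) := fun a ha b hb =>
      hmonoφ a (hT'.mem_iff.1 ha) b (hT'.mem_iff.1 hb)
    rw [wt, wt, impr_relabel φ T hm, prop_relabel φ T hm]

/-! ### Root decomposition -/

theorem perm_toFinset {l l' : List ℕ} (h : l.Perm l') : l.toFinset = l'.toFinset := by
  ext x; simp [List.mem_toFinset, h.mem_iff]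

/-- Split a tree with at least one child of the root into (label set of first subtree,
first subtree, remaining tree). -/
def toSig : LTree → (_ : Finset ℕ) × LTree × LTree
  | node a (c :: cs) => ⟨(labels c).toFinset, (c, node a cs)⟩
  | node a [] => ⟨∅, (node a [], node a [])⟩

theorem exists_cons_of_perm {T : LTree} {n : ℕ}
    (hT : (labels T).Perm (List.range' 1 (n+2))) : ∃ a c cs, T = node a (c :: cs) := by
  obtain ⟨a, cs⟩ := T
  cases cs with
  | nil =>
      exfalso
      have h1 := hT.length_eq
      simp [labels_node, labelsList] at h1
  | cons c cs' => exact ⟨a, c, cs', rfl⟩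

theorem Q_decomp (n : ℕ) :
    Q (List.range' 1 (n+2)) = ∑ S ∈ (Finset.Icc 1 (n+2)).powerset,
      (if 1 ∈ S then (MvPolynomial.X 0 : MvPolynomial (Fin 2) ℚ) else MvPolynomial.X 1)
        * Q (S.sort (· ≤ ·)) * Q ((Finset.Icc 1 (n+2) \ S).sort (· ≤ ·)) := by
  classical
  set U : Finset ℕ := Finset.Icc 1 (n+2) with hU
  set L : List ℕ := List.range' 1 (n+2) with hL
  have hLnd : L.Nodup := List.nodup_range'
  have hmemL : ∀ x : ℕ, x ∈ L ↔ 1 ≤ x ∧ x < n + 3 := by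
    intro x; rw [hL, List.mem_range'_1]; omega
  have hLU : L.toFinset = U := by
    ext x; rw [List.mem_toFinset, hmemL, hU, Finset.mem_Icc]; omega
  have hw : ∀ S : Finset ℕ,
      (if 1 ∈ S then (MvPolynomial.X 0 : MvPolynomial (Fin 2) ℚ) else MvPolynomial.X 1)
        * Q (S.sort (· ≤ ·)) * Q ((U \ S).sort (· ≤ ·))
      = ∑ p ∈ (TS_finite (S.sort (· ≤ ·))).toFinset ×ˢ
            (TS_finite ((U \ S).sort (· ≤ ·))).toFinset,
          (if 1 ∈ S then (MvPolynomial.X 0 : MvPolynomial (Fin 2) ℚ) else MvPolynomial.X 1)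
            * wt p.1 * wt p.2 := by
    intro S
    rw [Finset.sum_product, Q_eq_sum, Q_eq_sum, mul_assoc, Finset.sum_mul_sum, Finset.mul_sum]
    refine Finset.sum_congr rfl fun T1 _ => ?_
    rw [Finset.mul_sum]
    refine Finset.sum_congr rfl fun T2 _ => by ring
  rw [Finset.sum_congr rfl (fun S _ => hw S), Finset.sum_sigma']
  rw [Q_eq_sum]
  refine Finset.sum_bij' (fun T _ => toSig T)
    (fun p _ => node (rootLabel p.2.2) (p.2.1 :: children p.2.2)) ?_ ?_ ?_ ?_ ?_
  · -- forward membership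
    intro T hT
    rw [Set.Finite.mem_toFinset] at hT
    have hT' : (labels T).Perm L := hT
    obtain ⟨a, c, cs, rfl⟩ := exists_cons_of_perm hT'
    have hlabT : labels (node a (c :: cs)) = a :: (labels c ++ labelsList cs) := rfl
    have hnd : (labels (node a (c :: cs))).Nodup := hT'.nodup_iff.2 hLnd
    rw [hlabT] at hnd
    have hane : a ∉ labels c ++ labelsList cs := (List.nodup_cons.1 hnd).1
    have hndcc : (labels c ++ labelsList cs).Nodup := (List.nodup_cons.1 hnd).2
    obtain ⟨hndc, hndcs, hdisj⟩ := List.nodup_append.1 hndcc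
    show toSig (node a (c :: cs)) ∈ _
    rw [toSig]
    rw [Finset.mem_sigma]
    constructor
    · rw [Finset.mem_powerset]
      intro x hx
      rw [List.mem_toFinset] at hx
      rw [← hLU, List.mem_toFinset]
      exact hT'.mem_iff.1 (mem_labels_left a hx)
    · rw [Finset.mem_product, Set.Finite.mem_toFinset, Set.Finite.mem_toFinset]
      constructor
      · show (labels c).Perm _
        refine List.perm_of_nodup_nodup_toFinset_eq hndc (Finset.sort_nodup _ _) ?_
        rw [Finset.sort_toFinset]
      · show (labels (node a cs)).Perm _
        have hndr : (labels (node a cs)).Nodup := by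
          rw [labels_node, List.nodup_cons]
          exact ⟨fun hc => hane (List.mem_append_right _ hc), hndcs⟩
        refine List.perm_of_nodup_nodup_toFinset_eq hndr (Finset.sort_nodup _ _) ?_
        rw [Finset.sort_toFinset]
        ext x
        rw [List.mem_toFinset, Finset.mem_sdiff, ← hLU, List.mem_toFinset,
          List.mem_toFinset, labels_node]
        constructor
        · intro hx
          refine ⟨hT'.mem_iff.1 ?_, ?_⟩
          · rcases List.mem_cons.1 hx with rfl | hx
            · exact List.mem_cons_self
            · exact List.mem_cons_of_mem _ (List.mem_append_right _ hx)
          · intro hxc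
            rcases List.mem_cons.1 hx with rfl | hx
            · exact hane (List.mem_append_left _ hxc)
            · exact hdisj _ hxc _ hx rfl
        · rintro ⟨hx1, hx2⟩
          have := hT'.mem_iff.2 hx1
          rw [hlabT] at this
          rcases List.mem_cons.1 this with rfl | hx
          · exact List.mem_cons_self
          · rcases List.mem_append.1 hx with hx | hx
            · exact absurd hx hx2
            · exact List.mem_cons_of_mem _ hx
  · -- backward membership
    rintro ⟨S, T1, T2⟩ hp
    rw [Finset.mem_sigma, Finset.mem_product, Set.Finite.mem_toFinset,
      Set.Finite.mem_toFinset] at hp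
    obtain ⟨hS, h1, h2⟩ := hp
    rw [Finset.mem_powerset] at hS
    have h1' : (labels T1).Perm (S.sort (· ≤ ·)) := h1
    have h2' : (labels T2).Perm ((U \ S).sort (· ≤ ·)) := h2
    rw [Set.Finite.mem_toFinset]
    obtain ⟨b, cs2⟩ := T2
    show (labels (node b (T1 :: cs2))).Perm L
    have e1 : labels (node b (T1 :: cs2)) = b :: (labels T1 ++ labelsList cs2) := rfl
    rw [e1]
    have step1 : (b :: (labels T1 ++ labelsList cs2)).Perm
        (labels T1 ++ (b :: labelsList cs2)) := List.perm_middle.symm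
    refine step1.trans ?_
    have step2 : (labels T1 ++ (b :: labelsList cs2)).Perm
        (S.sort (· ≤ ·) ++ (U \ S).sort (· ≤ ·)) := List.Perm.append h1' h2'
    refine step2.trans ?_
    refine List.perm_of_nodup_nodup_toFinset_eq ?_ hLnd ?_
    · rw [List.nodup_append]
      refine ⟨Finset.sort_nodup _ _, Finset.sort_nodup _ _, fun x hx _ hx2 hxy => ?_⟩
      rw [Finset.mem_sort] at hx hx2
      exact (Finset.mem_sdiff.1 hx2).2 (hxy ▸ hx)
    · rw [hLU]
      ext x
      rw [List.mem_toFinset, List.mem_append, Finset.mem_sort, Finset.mem_sort,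
        Finset.mem_sdiff]
      constructor
      · rintro (hx | ⟨hx, _⟩)
        · exact hS hx
        · exact hx
      · intro hx
        by_cases hxS : x ∈ S
        · exact Or.inl hxS
        · exact Or.inr ⟨hx, hxS⟩
  · -- left inverse
    intro T hT
    rw [Set.Finite.mem_toFinset] at hT
    have hT' : (labels T).Perm L := hT
    obtain ⟨a, c, cs, rfl⟩ := exists_cons_of_perm hT'
    rfl
  · -- right inverse
    rintro ⟨S, T1, T2⟩ hp
    rw [Finset.mem_sigma, Finset.mem_product, Set.Finite.mem_toFinset,
      Set.Finite.mem_toFinset] at hp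
    obtain ⟨hS, h1, h2⟩ := hp
    have h1' : (labels T1).Perm (S.sort (· ≤ ·)) := h1
    have hfin : (labels T1).toFinset = S := by
      rw [perm_toFinset h1', Finset.sort_toFinset]
    obtain ⟨b, cs2⟩ := T2
    show toSig (node b (T1 :: cs2)) = _
    rw [toSig, hfin]
  · -- weights
    intro T hT
    rw [Set.Finite.mem_toFinset] at hT
    have hT' : (labels T).Perm L := hT
    obtain ⟨a, c, cs, rfl⟩ := exists_cons_of_perm hT'
    have hlabT : labels (node a (c :: cs)) = a :: (labels c ++ labelsList cs) := rfl
    have hnd : (labels (node a (c :: cs))).Nodup := hT'.nodup_iff.2 hLnd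
    rw [hlabT] at hnd
    have hane : a ∉ labels c ++ labelsList cs := (List.nodup_cons.1 hnd).1
    have hndcc : (labels c ++ labelsList cs).Nodup := (List.nodup_cons.1 hnd).2
    obtain ⟨hndc, hndcs, hdisj⟩ := List.nodup_append.1 hndcc
    have hpos : ∀ x ∈ labels (node a (c :: cs)), 1 ≤ x := by
      intro x hx
      exact ((hmemL x).1 (hT'.mem_iff.1 hx)).1
    have hone : (1:ℕ) ∈ labels (node a (c :: cs)) := hT'.mem_iff.2 ((hmemL 1).2 (by omega))
    show wt (node a (c :: cs)) = _
    show _ = (if 1 ∈ (labels c).toFinset then (MvPolynomial.X 0 : MvPolynomial (Fin 2) ℚ)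
      else MvPolynomial.X 1) * wt c * wt (node a cs)
    have hcond : (minLabel c < minLabel (node a cs)) ↔ 1 ∈ (labels c).toFinset := by
      rw [List.mem_toFinset]
      constructor
      · intro hlt
        by_contra h1c
        have h1r : (1:ℕ) ∈ labels (node a cs) := by
          rw [labels_node]
          rw [hlabT] at hone
          rcases List.mem_cons.1 hone with h | h
          · rw [← h]; exact List.mem_cons_self
          · rcases List.mem_append.1 h with h | h
            · exact absurd h h1c
            · exact List.mem_cons_of_mem _ h
        have := minLabel_le (node a cs) h1r
        have h2 : 1 ≤ minLabel c := hpos _ (mem_labels_left a (minLabel_mem c))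
        omega
      · intro h1c
        have hminc : minLabel c = 1 :=
          le_antisymm (minLabel_le c h1c) (hpos _ (mem_labels_left a (minLabel_mem c)))
        have hmr : minLabel (node a cs) ∈ labels (node a cs) := minLabel_mem _
        have hge : 1 ≤ minLabel (node a cs) := hpos _ (mem_labels_right hmr)
        have hne : minLabel (node a cs) ≠ 1 := by
          intro h
          rw [labels_node] at hmr
          rw [h] at hmr
          rcases List.mem_cons.1 hmr with h' | h'
          · exact hane (h' ▸ List.mem_append_left _ h1c)
          · exact hdisj _ h1c _ h' rfl
        omega
    rw [wt, wt, wt, impr_cons, prop_cons]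
    by_cases hlt : minLabel c < minLabel (node a cs)
    · rw [if_pos hlt, if_pos hlt, if_pos (hcond.1 hlt), pow_add, pow_add, pow_add, pow_add]
      ring
    · rw [if_neg hlt, if_neg hlt, if_neg (fun h => hlt (hcond.2 h)), pow_add, pow_add,
        pow_add, pow_add]
      ring

end LTree

open MvPolynomial

theorem Ppoly_eq_Q (n : ℕ) : Ppoly n = LTree.Q (List.range' 1 (n+1)) := rfl

theorem Ppoly_zero : Ppoly 0 = 1 := by
  rw [Ppoly_eq_Q]
  have h : List.range' 1 1 = [1] := rfl
  rw [h, LTree.Q_singleton]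

theorem Q_sort_eq_Ppoly {S : Finset ℕ} (hS : S.Nonempty) :
    LTree.Q (S.sort (· ≤ ·)) = Ppoly (S.card - 1) := by
  rw [LTree.Q_sort_range, Ppoly_eq_Q]
  have h : S.card - 1 + 1 = S.card := by
    have := Finset.card_pos.2 hS
    omega
  rw [h]

theorem Ppoly_rec (n : ℕ) :
    Ppoly (n+1) = ∑ m ∈ Finset.range (n+1),
      (((n+1).choose m) • ((X 0 : MvPolynomial (Fin 2) ℚ) * Ppoly m * Ppoly (n-m))
        + ((n+1).choose (m+1)) • ((X 1 : MvPolynomial (Fin 2) ℚ) * Ppoly m * Ppoly (n-m))) := by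
  classical
  have h0 : Ppoly (n+1) = LTree.Q (List.range' 1 (n+2)) := Ppoly_eq_Q (n+1)
  rw [h0, LTree.Q_decomp n]
  have hV : Finset.Icc 1 (n+2) = insert 1 (Finset.Icc 2 (n+2)) := by
    ext x; simp only [Finset.mem_Icc, Finset.mem_insert]; omega
  have h1V : (1:ℕ) ∉ Finset.Icc 2 (n+2) := by simp
  have hVcard : (Finset.Icc 2 (n+2)).card = n+1 := by rw [Nat.card_Icc]; omega
  have hUcard : (Finset.Icc 1 (n+2)).card = n+2 := by rw [Nat.card_Icc]; omega
  rw [hV, Finset.sum_powerset_insert h1V]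
  -- the two partial sums
  have claim1 : ∀ S ∈ (Finset.Icc 2 (n+2)).powerset,
      (if 1 ∈ S then (X 0 : MvPolynomial (Fin 2) ℚ) else X 1)
        * LTree.Q (S.sort (· ≤ ·)) * LTree.Q (((insert 1 (Finset.Icc 2 (n+2))) \ S).sort (· ≤ ·))
      = (fun j => if j = 0 then 0 else
          (X 1 : MvPolynomial (Fin 2) ℚ) * Ppoly (j-1) * Ppoly (n+1-j)) S.card := by
    intro S hS
    rw [Finset.mem_powerset] at hS
    have h1S : 1 ∉ S := fun h => h1V (hS h)
    rw [if_neg h1S]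
    have hSU : S ⊆ insert 1 (Finset.Icc 2 (n+2)) :=
      hS.trans (Finset.subset_insert _ _)
    rcases S.eq_empty_or_nonempty with rfl | hne
    · simp [Finset.sort_empty, LTree.Q_nil]
    · have hcard1 : 1 ≤ S.card := Finset.card_pos.2 hne
      have hcardle : S.card ≤ n+1 := hVcard ▸ Finset.card_le_card hS
      rw [Q_sort_eq_Ppoly hne]
      have hcomp : ((insert 1 (Finset.Icc 2 (n+2))) \ S).card = n+2 - S.card := by
        rw [Finset.card_sdiff_of_subset hSU, ← hV, hUcard]
      have hcompne : ((insert 1 (Finset.Icc 2 (n+2))) \ S).Nonempty := by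
        rw [← Finset.card_pos, hcomp]; omega
      rw [Q_sort_eq_Ppoly hcompne, hcomp]
      simp only
      rw [if_neg (by omega : ¬ S.card = 0)]
      have e : n + 2 - S.card - 1 = n + 1 - S.card := by omega
      rw [e]
  have claim2 : ∀ S ∈ (Finset.Icc 2 (n+2)).powerset,
      (if 1 ∈ insert 1 S then (X 0 : MvPolynomial (Fin 2) ℚ) else X 1)
        * LTree.Q ((insert 1 S).sort (· ≤ ·))
        * LTree.Q (((insert 1 (Finset.Icc 2 (n+2))) \ insert 1 S).sort (· ≤ ·))
      = (fun j => if j = n+1 then 0 else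
          (X 0 : MvPolynomial (Fin 2) ℚ) * Ppoly j * Ppoly (n-j)) S.card := by
    intro S hS
    rw [Finset.mem_powerset] at hS
    have h1S : 1 ∉ S := fun h => h1V (hS h)
    rw [if_pos (Finset.mem_insert_self _ _)]
    have hScard : (insert 1 S).card = S.card + 1 := Finset.card_insert_of_notMem h1S
    have hcardle : S.card ≤ n+1 := hVcard ▸ Finset.card_le_card hS
    have hSU : insert 1 S ⊆ insert 1 (Finset.Icc 2 (n+2)) := Finset.insert_subset_insert _ hS
    have hne : (insert 1 S).Nonempty := Finset.insert_nonempty _ _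
    rw [Q_sort_eq_Ppoly hne, hScard]
    simp only
    have hcomp : ((insert 1 (Finset.Icc 2 (n+2))) \ insert 1 S).card = n+1 - S.card := by
      rw [Finset.card_sdiff_of_subset hSU, ← hV, hUcard, hScard]
      omega
    by_cases htop : S.card = n+1
    · have : ((insert 1 (Finset.Icc 2 (n+2))) \ insert 1 S) = ∅ := by
        rw [← Finset.card_eq_zero, hcomp, htop]
        omega
      rw [this, Finset.sort_empty, LTree.Q_nil, if_pos htop]
      ring
    · have hcompne : ((insert 1 (Finset.Icc 2 (n+2))) \ insert 1 S).Nonempty := by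
        rw [← Finset.card_pos, hcomp]; omega
      rw [Q_sort_eq_Ppoly hcompne, hcomp, if_neg htop]
      have e1 : S.card + 1 - 1 = S.card := by omega
      have e2 : n + 1 - S.card - 1 = n - S.card := by omega
      rw [e1, e2]
  rw [Finset.sum_congr rfl claim1, Finset.sum_congr rfl claim2]
  rw [Finset.sum_powerset_apply_card
      (fun j => if j = 0 then 0 else (X 1 : MvPolynomial (Fin 2) ℚ) * Ppoly (j-1) * Ppoly (n+1-j)),
    Finset.sum_powerset_apply_card
      (fun j => if j = n+1 then 0 else (X 0 : MvPolynomial (Fin 2) ℚ) * Ppoly j * Ppoly (n-j)),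
    hVcard]
  nth_rewrite 2 [Finset.sum_range_succ]
  rw [Finset.sum_range_succ']
  simp only [eq_self_iff_true, if_true, Nat.succ_ne_zero, if_false, smul_zero,
    add_zero, zero_add]
  rw [← Finset.sum_add_distrib]
  refine Finset.sum_congr rfl fun m hm => ?_
  rw [Finset.mem_range] at hm
  rw [if_neg (by omega : ¬ m = n+1), show m+1-1 = m from rfl,
    show n+1-(m+1) = n-m from by omega]
  exact add_comm _ _

theorem Ppoly_sym (n : ℕ) :
    (2 : MvPolynomial (Fin 2) ℚ) * Ppoly (n+1) = ∑ m ∈ Finset.range (n+1),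
      ((n+2).choose (m+1)) •
        (((X 0 + X 1) : MvPolynomial (Fin 2) ℚ) * Ppoly m * Ppoly (n-m)) := by
  have h1 := Ppoly_rec n
  have h2 : Ppoly (n+1) = ∑ m ∈ Finset.range (n+1),
      (((n+1).choose (n-m)) • ((X 0 : MvPolynomial (Fin 2) ℚ) * Ppoly (n-m) * Ppoly (n-(n-m)))
        + ((n+1).choose ((n-m)+1)) •
          ((X 1 : MvPolynomial (Fin 2) ℚ) * Ppoly (n-m) * Ppoly (n-(n-m)))) := by
    rw [h1, ← Finset.sum_range_reflect]
    refine Finset.sum_congr rfl fun m hm => ?_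
    simp only [Nat.add_sub_cancel]
  rw [two_mul]
  nth_rewrite 1 [h1]
  nth_rewrite 1 [h2]
  rw [← Finset.sum_add_distrib]
  refine Finset.sum_congr rfl fun m hm => ?_
  rw [Finset.mem_range] at hm
  have hmn : m ≤ n := by omega
  have e1 : n - (n - m) = m := by omega
  rw [e1]
  have hs1 : (n+1).choose (n-m) = (n+1).choose (m+1) := by
    have h := Nat.choose_symm (show m+1 ≤ n+1 by omega)
    rw [show n+1-(m+1) = n-m by omega] at h
    exact h
  have hs2 : (n+1).choose ((n-m)+1) = (n+1).choose m := by
    have h := Nat.choose_symm (show (n-m)+1 ≤ n+1 by omega)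
    rw [show n+1-((n-m)+1) = m by omega] at h
    exact h.symm
  have hp : (n+2).choose (m+1) = (n+1).choose m + (n+1).choose (m+1) :=
    Nat.choose_succ_succ (n+1) m
  rw [hs1, hs2, hp]
  simp only [nsmul_eq_mul, Nat.cast_add]
  ring

/-! ### The power series computation -/

open PowerSeries in
noncomputable def Gser : PowerSeries (MvPolynomial (Fin 2) ℚ) :=
  PowerSeries.mk fun k => match k with
    | 0 => 0
    | (m+1) => MvPolynomial.C (((m+1).factorial : ℚ)⁻¹) * Ppoly m

theorem coeff_Gser_zero : (PowerSeries.coeff 0) Gser = 0 := by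
  rw [Gser, PowerSeries.coeff_mk]

theorem coeff_Gser_succ (m : ℕ) :
    (PowerSeries.coeff (m+1)) Gser
      = MvPolynomial.C (((m+1).factorial : ℚ)⁻¹) * Ppoly m := by
  rw [Gser, PowerSeries.coeff_mk]

theorem two_eq_C : (2 : PowerSeries (MvPolynomial (Fin 2) ℚ))
    = PowerSeries.C (R := MvPolynomial (Fin 2) ℚ) 2 := by
  rw [map_ofNat]

theorem key_eq : (2 : PowerSeries (MvPolynomial (Fin 2) ℚ)) * Gser
    = PowerSeries.C (R := MvPolynomial (Fin 2) ℚ) (X 0 + X 1) * Gser^2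
      + 2 * PowerSeries.X := by
  ext1 N
  rw [map_add, two_eq_C, PowerSeries.coeff_C_mul, PowerSeries.coeff_C_mul,
    PowerSeries.coeff_C_mul]
  match N with
  | 0 =>
      rw [coeff_Gser_zero]
      rw [sq, PowerSeries.coeff_mul]
      simp [coeff_Gser_zero]
  | 1 =>
      rw [coeff_Gser_succ 0]
      rw [sq, PowerSeries.coeff_mul]
      have hanti : Finset.HasAntidiagonal.antidiagonal (1:ℕ) = {(0,1), (1,0)} := rfl
      rw [hanti]
      simp [coeff_Gser_zero, Ppoly_zero, PowerSeries.coeff_one_X]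
  | (n+2) =>
      rw [coeff_Gser_succ (n+1)]
      rw [PowerSeries.coeff_X, if_neg (by omega : ¬ n + 2 = 1), mul_zero, add_zero]
      rw [sq, PowerSeries.coeff_mul, Finset.Nat.sum_antidiagonal_eq_sum_range_succ_mk]
      rw [Finset.sum_range_succ', Finset.sum_range_succ]
      rw [show n+2-(n+1+1) = 0 from by omega]
      simp only [coeff_Gser_zero, zero_mul, mul_zero, add_zero]
      have hterm : ∀ m ∈ Finset.range (n+1),
          (PowerSeries.coeff (m+1)) Gser * (PowerSeries.coeff (n+2-(m+1))) Gser
          = MvPolynomial.C (((m+1).factorial : ℚ)⁻¹ * (((n-m)+1).factorial : ℚ)⁻¹)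
              * (Ppoly m * Ppoly (n-m)) := by
        intro m hm
        rw [Finset.mem_range] at hm
        have e : n + 2 - (m+1) = (n-m)+1 := by omega
        rw [e, coeff_Gser_succ, coeff_Gser_succ, map_mul]
        ring
      rw [Finset.sum_congr rfl hterm]
      -- now use Ppoly_sym
      have hsym := Ppoly_sym n
      have hmul := congrArg (fun z => MvPolynomial.C (((n+2).factorial : ℚ)⁻¹) * z) hsym
      rw [Finset.mul_sum] at hmul
      have hterm2 : ∀ m ∈ Finset.range (n+1),
          MvPolynomial.C (((n+2).factorial : ℚ)⁻¹) *
            (((n+2).choose (m+1)) •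
              (((X 0 + X 1) : MvPolynomial (Fin 2) ℚ) * Ppoly m * Ppoly (n-m)))
          = (X 0 + X 1) * (MvPolynomial.C (((m+1).factorial : ℚ)⁻¹
              * (((n-m)+1).factorial : ℚ)⁻¹) * (Ppoly m * Ppoly (n-m))) := by
        intro m hm
        rw [Finset.mem_range] at hm
        have harith : ((n+2).factorial : ℚ)⁻¹ * ((n+2).choose (m+1) : ℚ)
            = ((m+1).factorial : ℚ)⁻¹ * (((n-m)+1).factorial : ℚ)⁻¹ := by
          rw [Nat.cast_choose ℚ (show m+1 ≤ n+2 by omega)]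
          rw [show n+2-(m+1) = (n-m)+1 by omega]
          have f1 : ((n+2).factorial : ℚ) ≠ 0 :=
            Nat.cast_ne_zero.2 (Nat.factorial_ne_zero _)
          have f2 : (((m+1)).factorial : ℚ) ≠ 0 :=
            Nat.cast_ne_zero.2 (Nat.factorial_ne_zero _)
          have f3 : ((((n-m)+1)).factorial : ℚ) ≠ 0 :=
            Nat.cast_ne_zero.2 (Nat.factorial_ne_zero _)
          field_simp
        rw [nsmul_eq_mul]
        have hcast : (((n+2).choose (m+1) : ℕ) : MvPolynomial (Fin 2) ℚ)
            = MvPolynomial.C (((n+2).choose (m+1) : ℕ) : ℚ) := by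
          rw [map_natCast]
        rw [hcast, ← mul_assoc, ← map_mul, harith, map_mul]
        ring
      rw [Finset.sum_congr rfl hterm2, ← Finset.mul_sum] at hmul
      calc (2 : MvPolynomial (Fin 2) ℚ)
            * (MvPolynomial.C (((n+2).factorial : ℚ)⁻¹) * Ppoly (n+1))
          = MvPolynomial.C (((n+2).factorial : ℚ)⁻¹) * (2 * Ppoly (n+1)) := by ring
        _ = (X 0 + X 1) * ∑ m ∈ Finset.range (n+1),
              MvPolynomial.C (((m+1).factorial : ℚ)⁻¹ * (((n-m)+1).factorial : ℚ)⁻¹)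
                * (Ppoly m * Ppoly (n-m)) := hmul


theorem derivativeFun_Gser :
    Gser.derivativeFun
      = PowerSeries.mk fun n => MvPolynomial.C ((n.factorial : ℚ)⁻¹) * Ppoly n := by
  ext1 n
  rw [show Gser.derivativeFun = PowerSeries.derivative _ Gser from rfl,
    PowerSeries.coeff_derivative, coeff_Gser_succ, PowerSeries.coeff_mk]
  have hc : MvPolynomial.C ((n : ℚ) + 1) = ((n : MvPolynomial (Fin 2) ℚ) + 1) := by
    rw [map_add, map_one, map_natCast]
  rw [← hc, mul_right_comm, ← map_mul]
  congr 2
  have hne : ((n.factorial : ℚ)) ≠ 0 := Nat.cast_ne_zero.2 (Nat.factorial_ne_zero _)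
  have hne1 : (((n+1).factorial : ℚ)) ≠ 0 := Nat.cast_ne_zero.2 (Nat.factorial_ne_zero _)
  rw [Nat.factorial_succ]
  push_cast
  field_simp
  try ring

theorem derivativeFun_Xps :
    (PowerSeries.X : PowerSeries (MvPolynomial (Fin 2) ℚ)).derivativeFun = 1 := by
  ext1 n
  rw [show (PowerSeries.X : PowerSeries (MvPolynomial (Fin 2) ℚ)).derivativeFun
    = PowerSeries.derivative _ PowerSeries.X from rfl, PowerSeries.coeff_derivative, PowerSeries.coeff_X, PowerSeries.coeff_one]
  cases n with
  | zero => simp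
  | succ k =>
      rw [if_neg (by omega : ¬ k + 1 + 1 = 1), if_neg (by omega : ¬ k + 1 = 0), zero_mul]

theorem two_ne_zero_ps : (2 : PowerSeries (MvPolynomial (Fin 2) ℚ)) ≠ 0 := by
  intro h
  have h2 := congrArg (PowerSeries.constantCoeff (R := MvPolynomial (Fin 2) ℚ)) h
  rw [map_ofNat, map_zero] at h2
  have h3 := congrArg (MvPolynomial.coeff 0) h2
  rw [MvPolynomial.coeff_zero] at h3
  have : (2 : MvPolynomial (Fin 2) ℚ) = MvPolynomial.C 2 := by rw [map_ofNat]
  rw [this, MvPolynomial.coeff_C] at h3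
  norm_num at h3

/-- In `ℚ[x,y][[q]]`, the generating function `F = Σ_{n≥0} Pₙ(x,y) qⁿ/n!` satisfies
`F² · (1 - 2(x+y)q) = 1`; that is, `Σ_{n≥0} Pₙ(x,y) qⁿ/n! = 1/√(1 - 2(x+y)q)`. -/
theorem egf_Ppoly :
    (PowerSeries.mk fun n => MvPolynomial.C ((n.factorial : ℚ)⁻¹) * Ppoly n) ^ 2
      * (1 - 2 * PowerSeries.C (R := MvPolynomial (Fin 2) ℚ) (X 0 + X 1) * PowerSeries.X)
      = 1 := by
  set F : PowerSeries (MvPolynomial (Fin 2) ℚ) :=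
    PowerSeries.mk fun n => MvPolynomial.C ((n.factorial : ℚ)⁻¹) * Ppoly n with hF
  have hkey := key_eq
  have hd := congrArg PowerSeries.derivativeFun hkey
  rw [sq] at hd
  rw [PowerSeries.derivativeFun_add, PowerSeries.derivativeFun_mul,
    PowerSeries.derivativeFun_mul, PowerSeries.derivativeFun_mul,
    PowerSeries.derivativeFun_mul] at hd
  have d2 : (2 : PowerSeries (MvPolynomial (Fin 2) ℚ)).derivativeFun = 0 := by
    rw [two_eq_C]; exact PowerSeries.derivative_C
  rw [d2, show (PowerSeries.C (R := MvPolynomial (Fin 2) ℚ) (X 0 + X 1)).derivativeFun = 0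
    from PowerSeries.derivative_C, derivativeFun_Gser, derivativeFun_Xps] at hd
  rw [← hF] at hd
  simp only [smul_eq_mul, mul_zero, zero_mul, add_zero, zero_add, mul_one] at hd
  have hFeq : F = PowerSeries.C (R := MvPolynomial (Fin 2) ℚ) (X 0 + X 1) * Gser * F + 1 := by
    refine mul_left_cancel₀ two_ne_zero_ps ?_
    linear_combination hd
  have hsq : (1 - PowerSeries.C (R := MvPolynomial (Fin 2) ℚ) (X 0 + X 1) * Gser)^2
      = 1 - 2 * PowerSeries.C (R := MvPolynomial (Fin 2) ℚ) (X 0 + X 1) * PowerSeries.X := by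
    linear_combination (- PowerSeries.C (R := MvPolynomial (Fin 2) ℚ) (X 0 + X 1)) * hkey
  calc F^2 * (1 - 2 * PowerSeries.C (R := MvPolynomial (Fin 2) ℚ) (X 0 + X 1) * PowerSeries.X)
      = (F * (1 - PowerSeries.C (R := MvPolynomial (Fin 2) ℚ) (X 0 + X 1) * Gser))^2 := by
        rw [← hsq]; ring
    _ = 1 := by
        have h1 : F * (1 - PowerSeries.C (R := MvPolynomial (Fin 2) ℚ) (X 0 + X 1) * Gser) = 1 := by
          linear_combination hFeq
        rw [h1, one_pow]
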